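/- Let f : ℝ → ℝ be Lipschitz and F : ℝ × ℝ → ℝ be a Lipschitz, monotone numerical flux consistent with f (F nondecreasing in the first variable, nonincreasing in the second, F(v,v) = f(v)). Then there exists a constant C > 0 depending only on the Lipschitz constant of F such that for all p, q ∈ ℝ, (f(p) − F(p,q))² ≤ C ∫_p^q (f(s) − F(p,q)) ds, where the right-hand side signed integral is nonnegative. -/

import Mathlib

open intervalIntegral

private lemma flux_aux (f : ℝ → ℝ) (F : ℝ → ℝ → ℝ) (LF : ℝ) (hLF : 0 ≤ LF)
    (hfc : Continuous f)
    (hFlip : ∀ p q p' q', |F p q - F p' q'| ≤ LF * (|p - p'| + |q - q'|))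
    (hcons : ∀ v, F v v = f v)
    (hmono₁ : ∀ w, Monotone (fun v => F v w))
    (hmono₂ : ∀ v, Antitone (fun w => F v w))
    (p q : ℝ) (hpq : p ≤ q) :
    0 ≤ (∫ s in p..q, (f s - F p q)) ∧
    (f p - F p q) ^ 2 ≤ (2 * (LF + 1)) * ∫ s in p..q, (f s - F p q) := by
  set L := LF + 1 with hL
  have hLpos : 0 < L := by positivity
  set a := f p - F p q with haa
  have ha0 : 0 ≤ a := by
    have h : F p q ≤ F p p := hmono₂ p hpq
    have := hcons p
    simp only [haa]
    linarith
  have haL : a ≤ L * (q - p) := by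
    have h := hFlip p p p q
    rw [sub_self, abs_zero, abs_sub_comm p q,
      abs_of_nonneg (show (0:ℝ) ≤ q - p by linarith)] at h
    have h2 : F p p - F p q ≤ |F p p - F p q| := le_abs_self _
    have ha : a = F p p - F p q := by rw [haa, hcons]
    nlinarith [h, h2]
  -- pointwise lower bound near p
  have hpt2 : ∀ s, p ≤ s → a - L * (s - p) ≤ f s - F p q := by
    intro s hs
    have h1 : F p s ≤ F s s := hmono₁ s hs
    have h2 : F p p - F p s ≤ LF * (s - p) := by
      have h := hFlip p p p s
      rw [sub_self, abs_zero, abs_sub_comm p s,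
        abs_of_nonneg (show (0:ℝ) ≤ s - p by linarith)] at h
      calc F p p - F p s ≤ |F p p - F p s| := le_abs_self _
        _ ≤ LF * (0 + (s - p)) := h
        _ = LF * (s - p) := by ring
    have ha : a = F p p - F p q := by rw [haa, hcons]
    have hLF' : LF * (s - p) ≤ L * (s - p) := by nlinarith
    have := hcons s
    nlinarith
  -- pointwise nonnegativity
  have hpt0 : ∀ s, p ≤ s → s ≤ q → 0 ≤ f s - F p q := by
    intro s hps hsq
    have h1 : F p s ≤ F s s := hmono₁ s hps
    have h2 : F p q ≤ F p s := hmono₂ p hsq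
    have := hcons s
    linarith
  set m := p + a / L with hmm
  have hm1 : p ≤ m := by
    have : 0 ≤ a / L := div_nonneg ha0 hLpos.le
    simp [hmm]; linarith
  have hm2 : m ≤ q := by
    have : a / L ≤ q - p := (div_le_iff₀' hLpos).mpr haL
    simp [hmm]; linarith
  have hint : ∀ x y : ℝ, IntervalIntegrable (fun s => f s - F p q) MeasureTheory.volume x y :=
    fun x y => (hfc.sub continuous_const).intervalIntegrable x y
  have hsplit : (∫ s in p..m, (f s - F p q)) + (∫ s in m..q, (f s - F p q))
      = ∫ s in p..q, (f s - F p q) :=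
    integral_add_adjacent_intervals (hint p m) (hint m q)
  have hI2 : 0 ≤ ∫ s in m..q, (f s - F p q) :=
    integral_nonneg hm2 (fun s hs => hpt0 s (le_trans hm1 hs.1) hs.2)
  have hlin : ∀ x y : ℝ, IntervalIntegrable (fun s => a - L * (s - p)) MeasureTheory.volume x y :=
    fun x y => (continuous_const.sub (continuous_const.mul
      (continuous_id.sub continuous_const))).intervalIntegrable x y
  have hI1 : (∫ s in p..m, (a - L * (s - p))) ≤ ∫ s in p..m, (f s - F p q) :=
    integral_mono_on hm1 (hlin p m) (hint p m) (fun s hs => hpt2 s hs.1)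
  have hcomp : (∫ s in p..m, (a - L * (s - p))) = a ^ 2 / (2 * L) := by
    have h1 : (∫ s in p..m, (a - L * (s - p)))
        = ∫ u in (0:ℝ)..(m - p), (a - L * u) := by
      have := intervalIntegral.integral_comp_sub_right (a := p) (b := m)
        (fun u => a - L * u) p
      simpa using this
    rw [h1]
    have h2 : (∫ u in (0:ℝ)..(m - p), (a - L * u))
        = a * (m - p) - L * ((m - p) ^ 2 / 2) := by
      rw [intervalIntegral.integral_sub (f := fun _ => a) (g := fun u => L * u)
        intervalIntegrable_const
        ((continuous_const.mul continuous_id').intervalIntegrable _ _),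
        intervalIntegral.integral_const, intervalIntegral.integral_const_mul, integral_id]
      simp; ring
    rw [h2]
    have hmp : m - p = a / L := by simp [hmm]
    rw [hmp]
    field_simp
    ring
  have hmain : a ^ 2 / (2 * L) ≤ ∫ s in p..q, (f s - F p q) := by
    rw [← hsplit, ← hcomp]
    linarith
  constructor
  · have : 0 ≤ a ^ 2 / (2 * L) := by positivity
    linarith
  · rw [hL] at hLpos ⊢
    rw [div_le_iff₀ (by linarith)] at hmain
    nlinarith [hmain]

theorem flux_viscosity_sq_bound_left (f : ℝ → ℝ) (F : ℝ → ℝ → ℝ) (Lf LF : ℝ)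
    (hLf : 0 ≤ Lf) (hLF : 0 ≤ LF)
    (hflip : ∀ x y, |f x - f y| ≤ Lf * |x - y|)
    (hFlip : ∀ p q p' q', |F p q - F p' q'| ≤ LF * (|p - p'| + |q - q'|))
    (hcons : ∀ v, F v v = f v)
    (hmono₁ : ∀ w, Monotone (fun v => F v w))
    (hmono₂ : ∀ v, Antitone (fun w => F v w)) :
    ∃ C > 0, ∀ p q : ℝ,
      0 ≤ (∫ s in p..q, (f s - F p q)) ∧
      (f p - F p q) ^ 2 ≤ C * ∫ s in p..q, (f s - F p q) := by
  have hfc : Continuous f := by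
    have : LipschitzWith ⟨Lf, hLf⟩ f := by
      apply LipschitzWith.of_dist_le_mul
      intro x y
      rw [Real.dist_eq, Real.dist_eq]
      exact hflip x y
    exact this.continuous
  refine ⟨2 * (LF + 1), by positivity, fun p q => ?_⟩
  rcases le_total p q with h | h
  · exact flux_aux f F LF hLF hfc hFlip hcons hmono₁ hmono₂ p q h
  · -- reflect
    set f' : ℝ → ℝ := fun x => -f (-x) with hf'
    set F' : ℝ → ℝ → ℝ := fun u v => -F (-u) (-v) with hF'
    have hfc' : Continuous f' := (hfc.comp continuous_neg).neg
    have hFlip' : ∀ p q p' q', |F' p q - F' p' q'| ≤ LF * (|p - p'| + |q - q'|) := by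
      intro a b c d
      have := hFlip (-a) (-b) (-c) (-d)
      simp only [hF']
      calc |-F (-a) (-b) - -F (-c) (-d)| = |F (-a) (-b) - F (-c) (-d)| := by
            rw [← abs_neg]; ring_nf
        _ ≤ LF * (|-a - -c| + |-b - -d|) := this
        _ = LF * (|a - c| + |b - d|) := by
            rw [show -a - -c = -(a - c) by ring, show -b - -d = -(b - d) by ring,
              abs_neg, abs_neg]
    have hcons' : ∀ v, F' v v = f' v := by intro v; simp [hF', hf', hcons]
    have hmono₁' : ∀ w, Monotone (fun v => F' v w) := by
      intro w x y hxy
      simp only [hF', neg_le_neg_iff]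
      exact hmono₁ (-w) (neg_le_neg hxy)
    have hmono₂' : ∀ v, Antitone (fun w => F' v w) := by
      intro v x y hxy
      simp only [hF', neg_le_neg_iff]
      exact hmono₂ (-v) (neg_le_neg hxy)
    have key := flux_aux f' F' LF hLF hfc' hFlip' hcons' hmono₁' hmono₂'
      (-p) (-q) (neg_le_neg h)
    have hFv : F' (-p) (-q) = -F p q := by simp [hF']
    have hfv : f' (-p) = -f p := by simp [hf']
    have hIv : (∫ s in (-p)..(-q), (f' s - F' (-p) (-q)))
        = ∫ s in p..q, (f s - F p q) := by
      have h1 : (∫ s in (-p)..(-q), (f' s - F' (-p) (-q)))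
          = ∫ s in (-p)..(-q), ((fun t => F p q - f t) (-s)) := by
        apply intervalIntegral.integral_congr
        intro s _
        simp [hf', hFv]
        ring
      rw [h1, intervalIntegral.integral_comp_neg (fun t => F p q - f t)]
      simp only [neg_neg]
      rw [intervalIntegral.integral_symm]
      rw [← intervalIntegral.integral_neg]
      congr 1
      ext s
      ring
    obtain ⟨k1, k2⟩ := key
    rw [hIv] at k1 k2
    rw [hfv, hFv] at k2
    refine ⟨k1, ?_⟩
    calc (f p - F p q) ^ 2 = (-f p - -F p q) ^ 2 := by ring
      _ ≤ 2 * (LF + 1) * ∫ s in p..q, (f s - F p q) := k2
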